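/- Best orthonormal approximation within a subspace: let F ⊂ ℝ^m be a k-dimensional subspace and y₁,...,y_k ∈ ℝ^m orthonormal vectors. Then there exist orthonormal vectors v₁,...,v_k ∈ F such that Σ_{i=1}^k ‖y_i − v_i‖² ≤ 2 Σ_{i=1}^k dist²(y_i, F), where dist(y,F) is the Euclidean distance from y to F. -/

import Mathlib

open scoped RealInnerProductSpace Matrix

set_option maxHeartbeats 1000000

noncomputable def eucEnorm {m : ℕ} (v : Fin m → ℝ) : ℝ := Real.sqrt (∑ i, v i ^ 2)

/-- Euclidean distance from a vector to a subspace of `ℝ^m`. -/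
noncomputable def distSub {m : ℕ} (y : Fin m → ℝ) (F : Submodule ℝ (Fin m → ℝ)) : ℝ :=
  ⨅ f : F, eucEnorm (y - (f : Fin m → ℝ))

lemma eucEnorm_eq_norm {m : ℕ} (v : Fin m → ℝ) :
    eucEnorm v = ‖(WithLp.equiv 2 (Fin m → ℝ)).symm v‖ := by
  rw [EuclideanSpace.norm_eq, eucEnorm]
  congr 1
  refine Finset.sum_congr rfl fun p _ => ?_
  rw [WithLp.equiv_symm_apply, PiLp.toLp_apply, Real.norm_eq_abs, sq_abs]

lemma inner_eq_sum {m : ℕ} (a b : Fin m → ℝ) :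
    ⟪(WithLp.equiv 2 (Fin m → ℝ)).symm a, (WithLp.equiv 2 (Fin m → ℝ)).symm b⟫ = ∑ p, a p * b p := by
  simp [PiLp.inner_apply, RCLike.inner_apply, mul_comm]

/-- Best orthonormal approximation within a subspace: for a `k`-dimensional subspace
`F ⊂ ℝ^m` and orthonormal `y₁,...,y_k`, there exist orthonormal `v₁,...,v_k ∈ F` with
`Σ ‖y_i − v_i‖² ≤ 2 Σ dist²(y_i, F)`. -/
theorem stmt19 {m k : ℕ} (F : Submodule ℝ (Fin m → ℝ)) (hF : Module.finrank ℝ F = k)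
    (y : Fin k → Fin m → ℝ)
    (hy : ∀ i j, ∑ p, y i p * y j p = if i = j then (1:ℝ) else 0) :
    ∃ v : Fin k → Fin m → ℝ, (∀ i, v i ∈ F) ∧
      (∀ i j, ∑ p, v i p * v j p = if i = j then (1:ℝ) else 0) ∧
      ∑ i, eucEnorm (y i - v i) ^ 2 ≤ 2 * ∑ i, (distSub (y i) F) ^ 2 := by
  classical
  set E := EuclideanSpace ℝ (Fin m) with hE
  set e2 := WithLp.equiv 2 (Fin m → ℝ) with he2
  set F' : Submodule ℝ (EuclideanSpace ℝ (Fin m)) := F.comap (WithLp.linearEquiv 2 ℝ (Fin m → ℝ)).toLinearMap with hF'def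
  have hmemF' : ∀ x : (EuclideanSpace ℝ (Fin m)), x ∈ F' ↔ e2 x ∈ F := fun x => Iff.rfl
  have hF' : Module.finrank ℝ F' = k := by
    rw [hF'def, Submodule.comap_equiv_eq_map_symm, LinearEquiv.finrank_map_eq]
    exact hF
  set yE : Fin k → (EuclideanSpace ℝ (Fin m)) := fun i => e2.symm (y i) with hyE
  have hyO : Orthonormal ℝ yE := by
    rw [orthonormal_iff_ite]
    intro i j
    rw [hyE]
    exact (inner_eq_sum (y i) (y j)).trans (hy i j)
  set P := F'.orthogonalProjectionOnto with hP
  set w : Fin k → (EuclideanSpace ℝ (Fin m)) := fun i => (P (yE i) : (EuclideanSpace ℝ (Fin m))) with hw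
  have hwmem : ∀ i, w i ∈ F' := fun i => (P (yE i)).2
  have hsubmem : ∀ z : (EuclideanSpace ℝ (Fin m)), z - (P z : (EuclideanSpace ℝ (Fin m))) ∈ F'ᗮ := fun z =>
    Submodule.sub_starProjection_mem_orthogonal (K := F') z
  have hpyth : ∀ z : (EuclideanSpace ℝ (Fin m)), ‖(P z : (EuclideanSpace ℝ (Fin m)))‖ ^ 2 + ‖z - (P z : (EuclideanSpace ℝ (Fin m)))‖ ^ 2 = ‖z‖ ^ 2 := by
    intro z
    have h0 : ⟪(P z : (EuclideanSpace ℝ (Fin m))), z - (P z : (EuclideanSpace ℝ (Fin m)))⟫ = 0 := (hsubmem z) (P z : (EuclideanSpace ℝ (Fin m))) (P z).2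
    have := norm_add_sq_real (P z : (EuclideanSpace ℝ (Fin m))) (z - (P z : (EuclideanSpace ℝ (Fin m))))
    simp only [h0, mul_zero, add_zero] at this
    rw [add_sub_cancel] at this
    linarith
  -- distance formula
  have hdist : ∀ i, distSub (y i) F = ‖yE i - w i‖ := by
    intro i
    have h1 : distSub (y i) F = ⨅ v : F', ‖yE i - (v : (EuclideanSpace ℝ (Fin m)))‖ := by
      rw [distSub]
      have hrange : (Set.range fun f : F => eucEnorm (y i - (f : Fin m → ℝ)))
          = Set.range fun v : F' => ‖yE i - (v : (EuclideanSpace ℝ (Fin m)))‖ := by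
        ext x
        constructor
        · rintro ⟨f, rfl⟩
          refine ⟨⟨e2.symm (f : Fin m → ℝ), f.2⟩, ?_⟩
          simp [eucEnorm_eq_norm, hyE, he2]
        · rintro ⟨v, rfl⟩
          refine ⟨⟨e2 (v : (EuclideanSpace ℝ (Fin m))), v.2⟩, ?_⟩
          simp [eucEnorm_eq_norm, hyE, he2]
      show sInf _ = sInf _
      rw [hrange]
    rw [h1]
    exact (Submodule.starProjection_minimal (U := F') (yE i)).symm
  -- Gram matrix
  set G : Matrix (Fin k) (Fin k) ℝ := fun i j => ⟪w i, w j⟫ with hGdef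
  have hG : G.IsHermitian := by
    show G.conjTranspose = G
    ext i j
    rw [Matrix.conjTranspose_apply]
    simp [hGdef, real_inner_comm]
  set q := hG.eigenvectorBasis with hq
  set μ := hG.eigenvalues with hμ
  have hμq : ∀ j, G *ᵥ ⇑(q j) = μ j • ⇑(q j) := fun j => hG.mulVec_eigenvectorBasis j
  set u : Fin k → (EuclideanSpace ℝ (Fin m)) := fun j => ∑ i, q j i • w i with hu
  have hqon : ∀ j j', ⟪(q j : EuclideanSpace ℝ (Fin k)), q j'⟫ = if j = j' then (1:ℝ) else 0 :=
    fun j j' => orthonormal_iff_ite.1 q.orthonormal j j'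
  have hwu : ∀ i j', ⟪w i, u j'⟫ = (G *ᵥ ⇑(q j')) i := by
    intro i j'
    rw [hu]
    simp only [inner_sum, real_inner_smul_right]
    simp [Matrix.mulVec, dotProduct, hGdef, mul_comm]
  have huu : ∀ j j', ⟪u j, u j'⟫ = if j = j' then μ j else 0 := by
    intro j j'
    rw [hu]
    simp only [sum_inner, real_inner_smul_left]
    have : ∀ i, ⟪w i, u j'⟫ = μ j' * q j' i := by
      intro i
      rw [hwu i j', hμq j']
      simp
    simp only [hu] at this
    simp only [this]
    have hinner := hqon j j'
    rw [PiLp.inner_apply] at hinner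
    simp only [RCLike.inner_apply, conj_trivial] at hinner
    have hmul : ∑ i, q j i * (μ j' * q j' i) = μ j' * ∑ i, q j i * q j' i := by
      rw [Finset.mul_sum]
      exact Finset.sum_congr rfl fun i _ => by ring
    rw [hmul, Finset.sum_congr rfl fun i _ => mul_comm (q j i) (q j' i), hinner]
    by_cases h : j = j' <;> simp [h]
  have hunorm : ∀ j, ‖u j‖ ^ 2 = μ j := by
    intro j
    rw [← real_inner_self_eq_norm_sq, huu j j]
    simp
  have hμ0 : ∀ j, 0 ≤ μ j := fun j => (hunorm j) ▸ sq_nonneg _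
  have hμ1 : ∀ j, μ j ≤ 1 := by
    intro j
    set z : (EuclideanSpace ℝ (Fin m)) := ∑ i, q j i • yE i with hz
    have hzn : ‖z‖ ^ 2 = 1 := by
      rw [← real_inner_self_eq_norm_sq, hz]
      rw [show (Finset.univ : Finset (Fin k)).sum (fun i => q j i • yE i)
        = ∑ i ∈ Finset.univ, (fun i => (q j i : ℝ)) i • yE i from rfl]
      rw [hyO.inner_sum]
      have := hqon j j
      rw [PiLp.inner_apply] at this
      simpa [RCLike.inner_apply, sq] using this
    have hPz : (P z : (EuclideanSpace ℝ (Fin m))) = u j := by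
      rw [hz, hu]
      rw [map_sum]
      push_cast
      refine Finset.sum_congr rfl fun i _ => ?_
      rw [map_smul]
      rfl
    have hle := hpyth z
    rw [hPz, hunorm j, hzn] at hle
    have h2 := sq_nonneg ‖z - (P z : (EuclideanSpace ℝ (Fin m)))‖
    rw [hPz] at h2
    linarith
  have humem : ∀ j, u j ∈ F' := by
    intro j
    rw [hu]
    exact Submodule.sum_mem _ fun i _ => Submodule.smul_mem _ _ (hwmem i)
  have huzero : ∀ j, μ j = 0 → u j = 0 := by
    intro j h
    have := hunorm j
    rw [h, pow_eq_zero_iff (by norm_num)] at this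
    exact norm_eq_zero.1 this
  -- orthonormal family inside F' from the nonzero eigenvalues, extended to a basis
  set v0 : Fin k → F' := fun j => (Real.sqrt (μ j))⁻¹ • (⟨u j, humem j⟩ : F') with hv0
  set S : Set (Fin k) := {j | μ j ≠ 0} with hS
  have horth : Orthonormal ℝ (S.restrict v0) := by
    rw [orthonormal_iff_ite]
    rintro ⟨j, hj⟩ ⟨j', hj'⟩
    have hcoe : ∀ a b : F', (⟪a, b⟫ : ℝ) = ⟪(a : (EuclideanSpace ℝ (Fin m))), (b : (EuclideanSpace ℝ (Fin m)))⟫ := fun a b => rfl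
    simp only [Set.restrict_apply, hv0]
    show ⟪(Real.sqrt (μ j))⁻¹ • (⟨u j, humem j⟩ : F'), (Real.sqrt (μ j'))⁻¹ • (⟨u j', humem j'⟩ : F')⟫ = _
    simp only [hcoe, Submodule.coe_smul, Submodule.coe_mk, real_inner_smul_left, real_inner_smul_right]
    simp only [huu j j']
    by_cases h : j = j'
    · subst h
      rw [if_pos rfl, if_pos rfl]
      have hjne : μ j ≠ 0 := hj
      have hs : Real.sqrt (μ j) * Real.sqrt (μ j) = μ j := Real.mul_self_sqrt (hμ0 j)
      rw [show (Real.sqrt (μ j))⁻¹ * ((Real.sqrt (μ j))⁻¹ * μ j)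
          = μ j / (Real.sqrt (μ j) * Real.sqrt (μ j)) by ring, hs, div_self hjne]
    · have hne : (⟨j, hj⟩ : S) ≠ ⟨j', hj'⟩ := by simpa [Subtype.ext_iff] using h
      rw [if_neg h, if_neg hne, mul_zero, mul_zero]
  obtain ⟨b, hb⟩ := horth.exists_orthonormalBasis_extension_of_card_eq
    (by rw [hF']; simp)
  set e : Fin k → (EuclideanSpace ℝ (Fin m)) := fun j => (b j : (EuclideanSpace ℝ (Fin m))) with he
  have hemem : ∀ j, e j ∈ F' := fun j => (b j).2
  have heon : ∀ j j', ⟪e j, e j'⟫ = if j = j' then (1:ℝ) else 0 := by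
    intro j j'
    exact orthonormal_iff_ite.1 b.orthonormal j j'
  have hue : ∀ j, ⟪u j, e j⟫ = Real.sqrt (μ j) := by
    intro j
    by_cases hμj : μ j = 0
    · rw [huzero j hμj, hμj]
      simp
    · have hbj := hb j hμj
      have hej : e j = (Real.sqrt (μ j))⁻¹ • u j :=
        calc e j = ((b j : F') : (EuclideanSpace ℝ (Fin m))) := rfl
        _ = ((v0 j : F') : (EuclideanSpace ℝ (Fin m))) := by rw [hbj]
        _ = (Real.sqrt (μ j))⁻¹ • u j := rfl
      rw [hej, real_inner_smul_right, huu j j, if_pos rfl]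
      have hs : Real.sqrt (μ j) * Real.sqrt (μ j) = μ j := Real.mul_self_sqrt (hμ0 j)
      have hpos : 0 < μ j := lt_of_le_of_ne (hμ0 j) (Ne.symm hμj)
      have hsne : Real.sqrt (μ j) ≠ 0 := by positivity
      rw [inv_mul_eq_div, div_eq_iff hsne]
      exact hs.symm
  -- Parseval: rows of q are orthonormal
  have hq2 : ∀ i i', ∑ j, q j i * q j i' = if i = i' then (1:ℝ) else 0 := by
    intro i i'
    have := q.sum_inner_mul_inner (EuclideanSpace.single i (1:ℝ)) (EuclideanSpace.single i' (1:ℝ))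
    simp only [EuclideanSpace.inner_single_left, EuclideanSpace.inner_single_right,
      conj_trivial, one_mul, mul_one] at this
    rw [this]
    simp [EuclideanSpace.single_apply, eq_comm]
  set v : Fin k → (EuclideanSpace ℝ (Fin m)) := fun i => ∑ j, q j i • e j with hv
  have hvmem : ∀ i, v i ∈ F' := fun i =>
    Submodule.sum_mem _ fun j _ => Submodule.smul_mem _ _ (hemem j)
  have hvv : ∀ i i', ⟪v i, v i'⟫ = if i = i' then (1:ℝ) else 0 := by
    intro i i'
    rw [hv]
    simp only [sum_inner, inner_sum, real_inner_smul_left, real_inner_smul_right]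
    have hthis : ∀ j : Fin k, ∑ j' : Fin k, q j i' * (q j' i * ⟪e j', e j⟫) = q j i' * q j i := by
      intro j
      rw [Finset.sum_eq_single j]
      · rw [heon j j, if_pos rfl, mul_one]
      · intro j' _ hne
        rw [heon j' j, if_neg hne, mul_zero, mul_zero]
      · intro h; exact absurd (Finset.mem_univ j) h
    rw [Finset.sum_congr rfl fun j _ => hthis j]
    rw [show (∑ j, q j i' * q j i) = ∑ j, q j i * q j i' from
      Finset.sum_congr rfl fun j _ => mul_comm _ _]
    exact hq2 i i' 
  -- the inner products ⟪yE i, v i⟫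
  have hyv : ∀ i, ⟪yE i, v i⟫ = ⟪w i, v i⟫ := by
    intro i
    have horthog : ⟪yE i - w i, v i⟫ = 0 := by
      rw [real_inner_comm]
      exact (hsubmem (yE i)) (v i) (hvmem i)
    rw [inner_sub_left] at horthog
    linarith
  have hwv : ∑ i, ⟪w i, v i⟫ = ∑ j, Real.sqrt (μ j) := by
    have h1 : ∀ i, ⟪w i, v i⟫ = ∑ j, q j i * ⟪w i, e j⟫ := by
      intro i
      rw [hv]
      simp only [inner_sum, real_inner_smul_right]
    simp only [h1]
    rw [Finset.sum_comm]
    refine Finset.sum_congr rfl fun j _ => ?_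
    rw [← hue j, hu]
    rw [sum_inner]
    exact Finset.sum_congr rfl fun i _ => by rw [real_inner_smul_left]
  -- sum of eigenvalues equals ∑ ‖w i‖²
  have hsum_mu : ∑ j, μ j = ∑ i, ‖w i‖ ^ 2 := by
    have h1 : ∀ j, μ j = ∑ i, ∑ i', q j i * q j i' * ⟪w i, w i'⟫ := by
      intro j
      have := huu j j
      rw [if_pos rfl] at this
      rw [← this, hu]
      simp only [sum_inner, real_inner_smul_left, inner_sum, real_inner_smul_right]
      refine Finset.sum_congr rfl fun i _ => ?_
      refine Finset.sum_congr rfl fun i' _ => ?_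
      rw [real_inner_comm]
      ring
    simp only [h1]
    rw [Finset.sum_comm]
    refine Finset.sum_congr rfl fun i _ => ?_
    rw [Finset.sum_comm]
    have h2 : ∀ i', ∑ j, q j i * q j i' * ⟪w i, w i'⟫ = (if i = i' then (1:ℝ) else 0) * ⟪w i, w i'⟫ := by
      intro i'
      rw [← hq2 i i', Finset.sum_mul]
    simp only [h2]
    rw [Finset.sum_eq_single i]
    · rw [if_pos rfl, one_mul, real_inner_self_eq_norm_sq]
    · intro i' _ hne
      rw [if_neg (Ne.symm hne), zero_mul]
    · intro h; exact absurd (Finset.mem_univ i) h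
  -- assemble
  refine ⟨fun i => e2 (v i), fun i => (hmemF' (v i)).1 (hvmem i), ?_, ?_⟩
  · intro i i'
    have := hvv i i'
    rwa [show v i = e2.symm (e2 (v i)) by simp, show v i' = e2.symm (e2 (v i')) by simp,
      inner_eq_sum] at this
  · have hL : ∀ i, eucEnorm (y i - e2 (v i)) ^ 2 = ‖yE i - v i‖ ^ 2 := by
      intro i
      rw [eucEnorm_eq_norm]
      congr 2
    have hnorm1 : ∀ i, ‖yE i‖ = 1 := hyO.1
    have hvnorm : ∀ i, ‖v i‖ ^ 2 = 1 := by
      intro i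
      rw [← real_inner_self_eq_norm_sq, hvv i i, if_pos rfl]
    have hexp : ∀ i, ‖yE i - v i‖ ^ 2 = 2 - 2 * ⟪w i, v i⟫ := by
      intro i
      rw [norm_sub_sq_real, hnorm1 i, hvnorm i, hyv i]
      ring
    have hRexp : ∀ i, (distSub (y i) F) ^ 2 = 1 - ‖w i‖ ^ 2 := by
      intro i
      rw [hdist i]
      have := hpyth (yE i)
      rw [hnorm1 i] at this
      show ‖yE i - (P (yE i) : (EuclideanSpace ℝ (Fin m)))‖ ^ 2 = 1 - ‖(P (yE i) : (EuclideanSpace ℝ (Fin m)))‖ ^ 2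
      linarith [this]
    have hsqrt_ge : ∀ j, μ j ≤ Real.sqrt (μ j) := by
      intro j
      have h1 : Real.sqrt (μ j) ≤ 1 := Real.sqrt_le_one.mpr (hμ1 j)
      have h2 : Real.sqrt (μ j) * Real.sqrt (μ j) = μ j := Real.mul_self_sqrt (hμ0 j)
      nlinarith [Real.sqrt_nonneg (μ j)]
    have hk : ∑ _i : Fin k, (1:ℝ) = k := by simp
    calc ∑ i, eucEnorm (y i - e2 (v i)) ^ 2
        = ∑ i, (2 - 2 * ⟪w i, v i⟫) := by
          refine Finset.sum_congr rfl fun i _ => ?_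
          rw [hL i, hexp i]
      _ = 2 * k - 2 * ∑ j, Real.sqrt (μ j) := by
          rw [Finset.sum_sub_distrib, ← Finset.mul_sum, hwv]
          simp [Finset.sum_const, mul_comm]
      _ ≤ 2 * k - 2 * ∑ j, μ j := by
          have hsum : ∑ j, μ j ≤ ∑ j, Real.sqrt (μ j) :=
            Finset.sum_le_sum (fun j _ => hsqrt_ge j)
          linarith
      _ = 2 * ∑ i, (1 - ‖w i‖ ^ 2) := by
          rw [hsum_mu, Finset.sum_sub_distrib, hk]
          ring
      _ = 2 * ∑ i, (distSub (y i) F) ^ 2 := by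
          congr 1
          exact Finset.sum_congr rfl fun i _ => (hRexp i).symm
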